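/- arXiv:2208.13058 — 5 statements merged into one kernel-verified Lean document; each statement's English description precedes it below -/
import Mathlib

section
/- Let d ∈ ℕ, let a b : Fin d → ℝ satisfy a i > 0 and b i > 0 for all i, let ε ≥ 0, and let r ∈ EuclideanSpace ℝ (Fin d). If δ* ∈ K(ε) satisfies ‖r − δ*‖ ≤ ‖r − δ‖ for every δ ∈ K(ε) (i.e. δ* is a Euclidean-nearest point of K(ε) to r), then for every coordinate i, either δ* i = 0 or (δ* i) * (r i) > 0; that is, every nonzero coordinate of the minimizer has the same strict sign as the corresponding coordinate of r. -/
/-- The asymmetric weighted-ℓ1 cost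
`c̄(δ) = ∑ i, (a i * max (-(δ i)) 0 + b i * max (δ i) 0)`. -/
noncomputable def cbar {d : ℕ} (a b : Fin d → ℝ) (δ : EuclideanSpace ℝ (Fin d)) : ℝ :=
  ∑ i, (a i * max (-(δ i)) 0 + b i * max (δ i) 0)

/-- The cost ball `K(ε) = {δ | c̄(δ) ≤ ε}`. -/
noncomputable def costBall {d : ℕ} (a b : Fin d → ℝ) (ε : ℝ) :
    Set (EuclideanSpace ℝ (Fin d)) :=
  {δ | cbar a b δ ≤ ε}

/-- Every nonzero coordinate of a Euclidean-nearest point of `K(ε)` to `r` has the same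
strict sign as the corresponding coordinate of `r`. -/
theorem stmt_0 {d : ℕ} (a b : Fin d → ℝ) (ha : ∀ i, 0 < a i) (hb : ∀ i, 0 < b i)
    (ε : ℝ) (hε : 0 ≤ ε) (r : EuclideanSpace ℝ (Fin d))
    (δstar : EuclideanSpace ℝ (Fin d)) (hmem : δstar ∈ costBall a b ε)
    (hmin : ∀ δ ∈ costBall a b ε, ‖r - δstar‖ ≤ ‖r - δ‖) :
    ∀ i, δstar i = 0 ∨ δstar i * r i > 0 := by
  intro i
  by_contra h
  push_neg at h
  obtain ⟨hne, hle⟩ := h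
  set δ' : EuclideanSpace ℝ (Fin d) := WithLp.toLp 2 (Function.update δstar i 0) with hδ'
  have hval : ∀ j, δ' j = if j = i then 0 else δstar j := by
    intro j
    by_cases hj : j = i
    · subst hj; simp [hδ', Function.update]
    · simp [hδ', Function.update, hj]
  have hmem' : δ' ∈ costBall a b ε := by
    have hcle : cbar a b δ' ≤ cbar a b δstar := by
      unfold cbar
      apply Finset.sum_le_sum
      intro j _
      rcases eq_or_ne j i with hj | hj
      · subst hj
        rw [hval]
        simp only [if_pos rfl, if_true, neg_zero, max_self, mul_zero, add_zero, zero_add]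
        have ha' := (ha j).le
        have hb' := (hb j).le
        positivity
      · rw [hval, if_neg hj]
    exact le_trans hcle hmem
  have hlt : ‖r - δ'‖ < ‖r - δstar‖ := by
    have hsum : ∑ j, ‖(r - δ') j‖ ^ 2 < ∑ j, ‖(r - δstar) j‖ ^ 2 := by
      apply Finset.sum_lt_sum
      · intro j _
        rcases eq_or_ne j i with hj | hj
        · subst hj
          simp only [PiLp.sub_apply, hval, if_pos rfl, if_true, sub_zero, Real.norm_eq_abs, sq_abs]
          nlinarith [mul_self_pos.mpr hne]
        · simp [PiLp.sub_apply, hval, if_neg hj]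
      · exact ⟨i, Finset.mem_univ i, by
          simp only [PiLp.sub_apply, hval, if_pos rfl, if_true, sub_zero, Real.norm_eq_abs, sq_abs]
          nlinarith [mul_self_pos.mpr hne]⟩
    rw [EuclideanSpace.norm_eq, EuclideanSpace.norm_eq]
    apply Real.sqrt_lt_sqrt
    · positivity
    · simpa [sq] using hsum
  exact absurd (hmin δ' hmem') (not_le.mpr hlt)
end

section
/- Let d ∈ ℕ, let a b : Fin d → ℝ satisfy a i > 0 and b i > 0 for all i, and let r δ ∈ EuclideanSpace ℝ (Fin d). If there is a coordinate i with (δ i) * (r i) < 0, then the vector δ' defined by δ' i = 0 and δ' j = δ j for all j ≠ i satisfies c̄(δ') < c̄(δ) and ‖r − δ'‖ < ‖r − δ‖. In particular, if δ ∈ K(ε) then δ' ∈ K(ε) and δ is strictly improved by zeroing out any coordinate whose sign disagrees with r. -/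
/-- Zeroing out a coordinate of `δ` whose sign disagrees with that of `r` strictly
decreases both the cost and the Euclidean distance to `r`; in particular membership
in the cost ball `K(ε)` is preserved. -/
theorem stmt_1 {d : ℕ} (a b : Fin d → ℝ) (ha : ∀ i, 0 < a i) (hb : ∀ i, 0 < b i)
    (r δ : EuclideanSpace ℝ (Fin d)) (i : Fin d) (hi : δ i * r i < 0)
    (δ' : EuclideanSpace ℝ (Fin d)) (hδ' : δ' = Function.update δ i 0) :
    cbar a b δ' < cbar a b δ ∧ ‖r - δ'‖ < ‖r - δ‖ ∧
      ∀ ε : ℝ, δ ∈ costBall a b ε → δ' ∈ costBall a b ε := by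
  have hδi : δ i ≠ 0 := by
    intro h; rw [h] at hi; simp at hi
  have hcost : cbar a b δ' < cbar a b δ := by
    unfold cbar
    apply Finset.sum_lt_sum
    · intro j _
      by_cases hj : j = i
      · subst hj
        rw [hδ']
        simp [Function.update_self]
        have h1 := (ha j).le; have h2 := (hb j).le
        have := le_max_right (-(δ j)) 0
        have := le_max_right (δ j) 0
        positivity
      · rw [hδ', Function.update_of_ne hj]
    · refine ⟨i, Finset.mem_univ i, ?_⟩
      rw [hδ']
      simp [Function.update_self]
      rcases lt_or_gt_of_ne hδi with h | h
      · have h : 0 < max (-(δ i)) 0 := by simp [lt_max_iff]; linarith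
        have h2 : (0:ℝ) ≤ b i * max (δ i) 0 :=
          mul_nonneg (hb i).le (le_max_right _ _)
        nlinarith [mul_pos (ha i) h]
      · have h : 0 < max (δ i) 0 := by simp [lt_max_iff]; linarith
        have h1 : (0:ℝ) ≤ a i * max (-(δ i)) 0 :=
          mul_nonneg (ha i).le (le_max_right _ _)
        nlinarith [mul_pos (hb i) h]
  refine ⟨hcost, ?_, fun ε hε => le_trans hcost.le hε⟩
  have h1 : ‖r - δ'‖ ^ 2 < ‖r - δ‖ ^ 2 := by
    rw [EuclideanSpace.norm_eq, EuclideanSpace.norm_eq,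
      Real.sq_sqrt (by positivity), Real.sq_sqrt (by positivity)]
    apply Finset.sum_lt_sum
    · intro j _
      by_cases hj : j = i
      · subst hj
        simp only [PiLp.sub_apply, hδ', Function.update_self, sub_zero, Real.norm_eq_abs, sq_abs]
        nlinarith
      · simp [PiLp.sub_apply, hδ', Function.update_of_ne hj]
    · refine ⟨i, Finset.mem_univ i, ?_⟩
      simp only [PiLp.sub_apply, hδ', Function.update_self, sub_zero, Real.norm_eq_abs, sq_abs]
      nlinarith
  nlinarith [norm_nonneg (r - δ'), norm_nonneg (r - δ)]
end

section
/- Let d ∈ ℕ, let a b : Fin d → ℝ satisfy a i > 0 and b i > 0 for all i, let ε ≥ 0, and let r ∈ EuclideanSpace ℝ (Fin d) with c̄(r) > ε. If δ* ∈ K(ε) is a Euclidean-nearest point of K(ε) to r, then the cost constraint is active at the optimum: c̄(δ*) = ε. -/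
lemma cbar_continuous {d : ℕ} (a b : Fin d → ℝ) : Continuous (cbar a b) := by
  unfold cbar
  apply continuous_finset_sum
  intro i _
  have hi : Continuous fun δ : EuclideanSpace ℝ (Fin d) => δ i :=
    (continuous_apply i).comp (PiLp.continuous_ofLp 2 fun _ : Fin d => ℝ)
  exact ((continuous_const.mul ((hi.neg).max continuous_const))).add
    (continuous_const.mul (hi.max continuous_const))

/-- If `r` lies strictly outside the cost ball `K(ε)`, then the cost constraint is active
at any Euclidean-nearest point of `K(ε)` to `r`: `c̄(δ*) = ε`. -/
theorem stmt_4 {d : ℕ} (a b : Fin d → ℝ) (ha : ∀ i, 0 < a i) (hb : ∀ i, 0 < b i)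
    (ε : ℝ) (hε : 0 ≤ ε) (r : EuclideanSpace ℝ (Fin d)) (hr : cbar a b r > ε)
    (δstar : EuclideanSpace ℝ (Fin d)) (hmem : δstar ∈ costBall a b ε)
    (hmin : ∀ δ ∈ costBall a b ε, ‖r - δstar‖ ≤ ‖r - δ‖) :
    cbar a b δstar = ε := by
  by_contra hne
  have hlt : cbar a b δstar < ε := lt_of_le_of_ne hmem hne
  have hner : r ≠ δstar := by
    intro h; rw [h] at hr; exact absurd hr (not_lt.mpr hlt.le)
  have hnorm : 0 < ‖r - δstar‖ := by
    rw [norm_pos_iff, sub_ne_zero]; exact hner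
  -- the path from δstar toward r
  set g : ℝ → EuclideanSpace ℝ (Fin d) := fun t => δstar + t • (r - δstar) with hg
  have hgc : Continuous g := by fun_prop
  have hcg : Continuous fun t => cbar a b (g t) := (cbar_continuous a b).comp hgc
  have h0 : cbar a b (g 0) < ε := by simp [hg, hlt]
  have : ∀ᶠ t in nhds (0 : ℝ), cbar a b (g t) < ε :=
    (hcg.continuousAt).eventually_lt continuousAt_const h0
  obtain ⟨δ', hδpos, hδ⟩ := Metric.eventually_nhds_iff.mp this
  set t : ℝ := min (δ' / 2) (1 / 2) with htdef
  have ht0 : 0 < t := lt_min (by linarith) (by norm_num)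
  have ht1 : t < 1 := lt_of_le_of_lt (min_le_right _ _) (by norm_num)
  have htlt : cbar a b (g t) < ε := hδ (by
    rw [Real.dist_eq, sub_zero, abs_of_pos ht0]
    exact lt_of_le_of_lt (min_le_left _ _) (by linarith))
  have ht01 : t ∈ Set.Ioo (0:ℝ) 1 := ⟨ht0, ht1⟩
  have hmemt : g t ∈ costBall a b ε := le_of_lt htlt
  have hd := hmin (g t) hmemt
  have hcalc : r - g t = (1 - t) • (r - δstar) := by
    simp [hg]; module
  rw [hcalc, norm_smul, Real.norm_eq_abs, abs_of_pos (by linarith [ht01.2])] at hd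
  nlinarith [ht01.1, ht01.2]
end

section
/- Let d ∈ ℕ, let a b : Fin d → ℝ satisfy a i > 0 and b i > 0 for all i, let ε ≥ 0, and let r ∈ EuclideanSpace ℝ (Fin d). Define sign-selected weights w : Fin d → ℝ by w i = b i if r i ≥ 0 and w i = a i if r i < 0, and define the weighted ℓ1 ball L(ε) = {δ | ∑ i, w i * |δ i| ≤ ε}. Then a point δ* is a Euclidean-nearest point of K(ε) to r if and only if it is a Euclidean-nearest point of L(ε) to r; in particular the Euclidean projection of r onto the asymmetric cost ball K(ε) coincides with the Euclidean projection of r onto the symmetric weighted ℓ1 ball L(ε). -/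
/-- The symmetric weighted ℓ1 ball `L(ε) = {δ | ∑ i, w i * |δ i| ≤ ε}`. -/
noncomputable def wl1Ball {d : ℕ} (w : Fin d → ℝ) (ε : ℝ) :
    Set (EuclideanSpace ℝ (Fin d)) :=
  {δ | ∑ i, w i * |δ i| ≤ ε}

/-- With sign-selected weights `w i = b i` if `r i ≥ 0` and `w i = a i` otherwise,
a point is a Euclidean-nearest point of the asymmetric cost ball `K(ε)` to `r` iff
it is a Euclidean-nearest point of the symmetric weighted ℓ1 ball `L(ε)` to `r`. -/
theorem stmt_5 {d : ℕ} (a b : Fin d → ℝ) (ha : ∀ i, 0 < a i) (hb : ∀ i, 0 < b i)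
    (ε : ℝ) (hε : 0 ≤ ε) (r : EuclideanSpace ℝ (Fin d))
    (w : Fin d → ℝ) (hw : ∀ i, w i = if 0 ≤ r i then b i else a i) :
    ∀ δstar : EuclideanSpace ℝ (Fin d),
      (δstar ∈ costBall a b ε ∧ ∀ δ ∈ costBall a b ε, ‖r - δstar‖ ≤ ‖r - δ‖) ↔
      (δstar ∈ wl1Ball w ε ∧ ∀ δ ∈ wl1Ball w ε, ‖r - δstar‖ ≤ ‖r - δ‖) := by
  classical
  set T : EuclideanSpace ℝ (Fin d) → EuclideanSpace ℝ (Fin d) :=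
    fun δ => WithLp.toLp 2 (fun i => if 0 ≤ r i then max (δ i) 0 else min (δ i) 0) with hT
  have hTapp : ∀ δ i, T δ i = if 0 ≤ r i then max (δ i) 0 else min (δ i) 0 := by
    intro δ i; rfl
  -- norm formula
  have hnorm : ∀ x : EuclideanSpace ℝ (Fin d), ‖r - x‖ = Real.sqrt (∑ i, (r i - x i)^2) := by
    intro x
    rw [EuclideanSpace.norm_eq]
    congr 1
    refine Finset.sum_congr rfl fun i _ => ?_
    simp [Real.norm_eq_abs, sq_abs]
  -- squared coordinate inequality
  have hsq : ∀ δ i, (r i - T δ i)^2 ≤ (r i - δ i)^2 := by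
    intro δ i
    rw [hTapp]
    split_ifs with h
    · rcases le_or_gt 0 (δ i) with h' | h'
      · rw [max_eq_left h']
      · rw [max_eq_right h'.le]; nlinarith
    · push_neg at h
      rcases le_or_gt (δ i) 0 with h' | h'
      · rw [min_eq_left h']
      · rw [min_eq_right h'.le]; nlinarith
  have hle : ∀ δ, ‖r - T δ‖ ≤ ‖r - δ‖ := by
    intro δ
    rw [hnorm, hnorm]
    exact Real.sqrt_le_sqrt (Finset.sum_le_sum fun i _ => hsq δ i)
  -- strict version
  have hlt : ∀ δ i, T δ i ≠ δ i → ‖r - T δ‖ < ‖r - δ‖ := by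
    intro δ i hi
    rw [hnorm, hnorm]
    apply Real.sqrt_lt_sqrt
    · exact Finset.sum_nonneg fun j _ => sq_nonneg _
    apply Finset.sum_lt_sum (fun j _ => hsq δ j) ⟨i, Finset.mem_univ i, ?_⟩
    have := hTapp δ i
    rw [this] at hi ⊢
    split_ifs at hi ⊢ with h
    · rcases le_or_gt 0 (δ i) with h' | h'
      · exact absurd (max_eq_left h') hi
      · rw [max_eq_right h'.le]; nlinarith
    · push_neg at h
      rcases le_or_gt (δ i) 0 with h' | h'
      · exact absurd (min_eq_left h') hi
      · rw [min_eq_right h'.le]; nlinarith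
  -- cbar (T δ) = weighted l1 of T δ
  have key : ∀ δ i, a i * max (-(T δ i)) 0 + b i * max (T δ i) 0 = w i * |T δ i| := by
    intro δ i
    rw [hTapp, hw]
    split_ifs with h
    · have h1 : (0:ℝ) ≤ max (δ i) 0 := le_max_right _ _
      rw [max_eq_right (by linarith : -(max (δ i) 0) ≤ 0), max_eq_left h1,
        abs_of_nonneg h1]
      ring
    · have h1 : min (δ i) 0 ≤ 0 := min_le_right _ _
      rw [max_eq_left (by linarith : (0:ℝ) ≤ -(min (δ i) 0)), max_eq_right h1,
        abs_of_nonpos h1]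
      ring
  have hcbarT : ∀ δ, cbar a b (T δ) = ∑ i, w i * |T δ i| := by
    intro δ
    exact Finset.sum_congr rfl fun i _ => key δ i
  -- cbar (T δ) ≤ cbar δ
  have hc1 : ∀ δ, cbar a b (T δ) ≤ cbar a b δ := by
    intro δ
    unfold cbar
    refine Finset.sum_le_sum fun i _ => ?_
    rw [hTapp]
    have hai := (ha i).le
    have hbi := (hb i).le
    split_ifs with h
    · rcases le_or_gt 0 (δ i) with h' | h'
      · simp only [max_eq_left h']
        exact le_rfl
      · have e2 : -δ i ⊔ 0 = -δ i := max_eq_left (by linarith)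
        simp only [max_eq_right h'.le, e2, neg_zero, max_self, mul_zero,
          add_zero, zero_add]
        nlinarith
    · push_neg at h
      rcases le_or_gt (δ i) 0 with h' | h'
      · simp only [min_eq_left h']
        exact le_rfl
      · have e3 : -δ i ⊔ 0 = 0 := max_eq_right (by linarith)
        have e4 : δ i ⊔ 0 = δ i := max_eq_left h'.le
        simp only [min_eq_right h'.le, e3, e4, neg_zero, max_self, mul_zero,
          add_zero, zero_add]
        nlinarith
  -- weighted l1 of T δ ≤ weighted l1 of δ
  have hc2 : ∀ δ, (∑ i, w i * |T δ i|) ≤ ∑ i, w i * |δ i| := by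
    intro δ
    refine Finset.sum_le_sum fun i _ => ?_
    have hwpos : 0 < w i := by rw [hw]; split_ifs; exacts [hb i, ha i]
    apply mul_le_mul_of_nonneg_left _ hwpos.le
    rw [hTapp]
    split_ifs with h
    · rcases le_or_gt 0 (δ i) with h' | h'
      · rw [max_eq_left h']
      · rw [max_eq_right h'.le]; simp [abs_le, abs_nonneg, le_abs_self, abs_of_neg h', h'.le]
    · rcases le_or_gt (δ i) 0 with h' | h'
      · rw [min_eq_left h']
      · rw [min_eq_right h'.le]; simp [abs_nonneg]
  -- membership transfers
  have hKL : ∀ δ ∈ costBall a b ε, T δ ∈ wl1Ball w ε := by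
    intro δ hδ
    have : cbar a b (T δ) ≤ ε := le_trans (hc1 δ) hδ
    rw [hcbarT] at this
    exact this
  have hLK : ∀ δ ∈ wl1Ball w ε, T δ ∈ costBall a b ε := by
    intro δ hδ
    show cbar a b (T δ) ≤ ε
    rw [hcbarT]
    exact le_trans (hc2 δ) hδ
  intro δstar
  constructor
  · rintro ⟨hmem, hmin⟩
    have hfix : T δstar = δstar := by
      by_contra hne
      obtain ⟨i, hi⟩ : ∃ i, T δstar i ≠ δstar i := by
        by_contra h
        push_neg at h
        exact hne (PiLp.ext h)
      have hTK : T δstar ∈ costBall a b ε := le_trans (hc1 δstar) hmem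
      exact absurd (hmin _ hTK) (not_le.mpr (hlt δstar i hi))
    constructor
    · have := hKL δstar hmem
      rwa [hfix] at this
    · intro δ hδ
      exact le_trans (hmin _ (hLK δ hδ)) (hle δ)
  · rintro ⟨hmem, hmin⟩
    have hfix : T δstar = δstar := by
      by_contra hne
      obtain ⟨i, hi⟩ : ∃ i, T δstar i ≠ δstar i := by
        by_contra h
        push_neg at h
        exact hne (PiLp.ext h)
      have hTL : T δstar ∈ wl1Ball w ε := by
        show (∑ i, w i * |T δstar i|) ≤ ε
        exact le_trans (hc2 δstar) hmem
      exact absurd (hmin _ hTL) (not_le.mpr (hlt δstar i hi))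
    constructor
    · have := hLK δstar hmem
      rwa [hfix] at this
    · intro δ hδ
      exact le_trans (hmin _ (hKL δ hδ)) (hle δ)
end

section
/- Let d ∈ ℕ, let w z : Fin d → ℝ satisfy w i > 0 and z i ≥ 0 for all i, and let ε ≥ 0 with ∑ i, w i * z i > ε. Suppose λ ≥ 0 satisfies ∑ i, w i * max (z i − λ * w i) 0 = ε. Then the soft-thresholded vector δ* with coordinates δ* i = max (z i − λ * w i) 0 is the unique minimizer of the Euclidean distance ‖z − δ‖ over the weighted ℓ1 ball {δ ∈ EuclideanSpace ℝ (Fin d) | ∑ i, w i * |δ i| ≤ ε}; i.e., δ* is the Euclidean projection of z onto this ball. -/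
/-- If `λ ≥ 0` exactly exhausts the budget, i.e. `∑ i, w i * max (z i − λ w i) 0 = ε`,
then the soft-thresholded vector `δ* i = max (z i − λ w i) 0` is the unique minimizer of
the Euclidean distance to `z` over the weighted ℓ1 ball `{δ | ∑ i, w i * |δ i| ≤ ε}`. -/
theorem stmt_7 {d : ℕ} (w : Fin d → ℝ) (z : EuclideanSpace ℝ (Fin d))
    (hw : ∀ i, 0 < w i) (hz : ∀ i, 0 ≤ z i)
    (ε : ℝ) (hε : 0 ≤ ε) (hout : ∑ i, w i * z i > ε)
    (lam : ℝ) (hlam : 0 ≤ lam) (hexact : ∑ i, w i * max (z i - lam * w i) 0 = ε)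
    (δstar : EuclideanSpace ℝ (Fin d)) (hδstar : ∀ i, δstar i = max (z i - lam * w i) 0) :
    (∑ i, w i * |δstar i| ≤ ε) ∧
      ∀ δ : EuclideanSpace ℝ (Fin d), (∑ i, w i * |δ i| ≤ ε) →
        ‖z - δstar‖ ≤ ‖z - δ‖ ∧ (δ ≠ δstar → ‖z - δstar‖ < ‖z - δ‖) := by
  have hfeas : ∑ i, w i * |δstar i| = ε := by
    rw [← hexact]
    exact Finset.sum_congr rfl fun i _ => by
      rw [hδstar i, abs_of_nonneg (le_max_right _ _)]
  have hlow : ∀ i, 0 ≤ z i - δstar i := by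
    intro i; rw [hδstar i]
    rcases max_cases (z i - lam * w i) 0 with ⟨h, _⟩ | ⟨h, _⟩ <;>
      nlinarith [hz i, (hw i).le, hlam]
  have hup : ∀ i, z i - δstar i ≤ lam * w i := by
    intro i; rw [hδstar i]
    rcases max_cases (z i - lam * w i) 0 with ⟨h, _⟩ | ⟨h, h'⟩ <;> nlinarith
  have heq : ∀ i, (z i - δstar i) * δstar i = lam * (w i * |δstar i|) := by
    intro i
    rcases max_cases (z i - lam * w i) 0 with ⟨h, hge⟩ | ⟨h, _⟩
    · rw [hδstar i, h, abs_of_nonneg hge]; ring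
    · rw [hδstar i, h]; simp
  have key : ∀ δ : EuclideanSpace ℝ (Fin d), (∑ i, w i * |δ i| ≤ ε) →
      ‖z - δstar‖ ^ 2 + ‖δstar - δ‖ ^ 2 ≤ ‖z - δ‖ ^ 2 := by
    intro δ hδ
    have hsplit : z - δ = (z - δstar) + (δstar - δ) := by abel
    have hexp : ‖z - δ‖ ^ 2 = ‖z - δstar‖ ^ 2
        + 2 * (inner ℝ (z - δstar) (δstar - δ) : ℝ) + ‖δstar - δ‖ ^ 2 := by
      rw [hsplit, @norm_add_sq_real]
    have hinner : (inner ℝ (z - δstar) (δstar - δ) : ℝ)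
        = ∑ i, (z i - δstar i) * (δstar i - δ i) := by
      simp [PiLp.inner_apply, PiLp.sub_apply, mul_comm]
    have h1 : ∑ i, (z i - δstar i) * (δstar i - δ i)
        = (∑ i, (z i - δstar i) * δstar i) - ∑ i, (z i - δstar i) * δ i := by
      rw [← Finset.sum_sub_distrib]
      exact Finset.sum_congr rfl fun i _ => by ring
    have h2 : ∑ i, (z i - δstar i) * δstar i = lam * ε := by
      rw [← hfeas, Finset.mul_sum]
      exact Finset.sum_congr rfl fun i _ => heq i
    have h3 : ∑ i, (z i - δstar i) * δ i ≤ lam * ε := by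
      calc ∑ i, (z i - δstar i) * δ i ≤ ∑ i, lam * (w i * |δ i|) := by
            refine Finset.sum_le_sum fun i _ => ?_
            have := hlow i; have := hup i
            have h4 : δ i ≤ |δ i| := le_abs_self _
            have h5 : -|δ i| ≤ δ i := neg_abs_le _
            nlinarith [abs_nonneg (δ i)]
        _ = lam * ∑ i, w i * |δ i| := by rw [Finset.mul_sum]
        _ ≤ lam * ε := by nlinarith
    have hpos : 0 ≤ (inner ℝ (z - δstar) (δstar - δ) : ℝ) := by
      rw [hinner, h1, h2]; linarith
    nlinarith [hexp]
  refine ⟨hfeas.le, fun δ hδ => ?_⟩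
  have hk := key δ hδ
  constructor
  · nlinarith [norm_nonneg (z - δ), norm_nonneg (z - δstar), norm_nonneg (δstar - δ)]
  · intro hne
    have : δstar - δ ≠ 0 := sub_ne_zero.mpr (Ne.symm hne)
    have hpos : 0 < ‖δstar - δ‖ := norm_pos_iff.mpr this
    nlinarith [norm_nonneg (z - δ), norm_nonneg (z - δstar)]
end
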